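/- Let k ≥ 1, r > 0, and let B(y₀, 4r) ⊆ ℝ^k be a Euclidean ball. For u ∈ L¹(B(y₀,4r)) with u ≥ 0, and for x, y ∈ ℝ^k, define F_u(x,y) := ∫₀^{|x-y|} u(x + s·(y-x)/|x-y|) ds (the integral of u along the segment from x to y). Then for any x₀, y₀ with |x₀ − y₀| = r: ∫_{B(x₀,r)} ∫_{B(y₀,r)} F_u(x,y) dy dx ≤ 2^{k+3}·r·|B(y₀,4r)|·∫_{B(y₀,4r)} u(z) dz. -/

import Mathlib

open MeasureTheory Metric Set
open scoped ENNReal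

open MeasureTheory Metric Set
open scoped ENNReal

lemma seg_ofReal_integral_le {α : Type*} [MeasurableSpace α] (μ : Measure α) {f : α → ℝ}
    (hf : ∀ x, 0 ≤ f x) :
    ENNReal.ofReal (∫ x, f x ∂μ) ≤ ∫⁻ x, ENNReal.ofReal (f x) ∂μ := by
  by_cases h : AEStronglyMeasurable f μ
  · rw [integral_eq_lintegral_of_nonneg_ae (Filter.Eventually.of_forall hf) h]
    exact ENNReal.ofReal_toReal_le
  · rw [integral_undef (fun hint => h hint.aestronglyMeasurable)]
    simp

lemma seg_aux_meas {α : Type*} [MeasurableSpace α] {k : ℕ}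
    {G : EuclideanSpace ℝ (Fin k) → ℝ≥0∞} (hG : Measurable G)
    {φ ψ : α → EuclideanSpace ℝ (Fin k)} (hφ : Measurable φ) (hψ : Measurable ψ)
    (ν : Measure ℝ) [SFinite ν] :
    Measurable fun a => ∫⁻ τ, G (φ a + τ • ψ a) ∂ν := by
  have : Measurable fun p : α × ℝ => G (φ p.1 + p.2 • ψ p.1) :=
    hG.comp ((hφ.comp measurable_fst).add (measurable_snd.smul (hψ.comp measurable_fst)))
  exact this.lintegral_prod_right'

lemma seg_comp_smul {k : ℕ} (G : EuclideanSpace ℝ (Fin k) → ℝ≥0∞) (hG : Measurable G)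
    {σ : ℝ} (hσ : 0 < σ) :
    ∫⁻ w, G (σ • w) = ENNReal.ofReal ((σ ^ k)⁻¹) * ∫⁻ z, G z := by
  have h1 : ∫⁻ z, G z ∂(Measure.map (σ • ·) volume) = ∫⁻ w, G (σ • w) :=
    lintegral_map hG (measurable_const_smul σ)
  rw [Measure.map_addHaar_smul volume hσ.ne', lintegral_smul_measure] at h1
  rw [← h1, finrank_euclideanSpace_fin, abs_of_nonneg (by positivity), smul_eq_mul]

lemma seg_step {k : ℕ} (G : EuclideanSpace ℝ (Fin k) → ℝ≥0∞) (hG : Measurable G)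
    {σ : ℝ} (hσ : 1/2 ≤ σ) (c : EuclideanSpace ℝ (Fin k))
    {A B : Set (EuclideanSpace ℝ (Fin k))} (hA : MeasurableSet A) (hB : MeasurableSet B)
    (hmap : ∀ w ∈ A, c + σ • w ∈ B) :
    ∫⁻ w in A, G (c + σ • w) ≤ ENNReal.ofReal (2 ^ k) * ∫⁻ z in B, G z := by
  have hσ0 : 0 < σ := by linarith
  set H := B.indicator G with hHdef
  have hH : Measurable H := hG.indicator hB
  have hHc : Measurable fun v => H (c + v) := hH.comp (measurable_const_add c)
  calc ∫⁻ w in A, G (c + σ • w) = ∫⁻ w in A, H (c + σ • w) := by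
        refine setLIntegral_congr_fun hA (fun w hw => ?_)
        rw [hHdef, Set.indicator_of_mem (hmap w hw)]
    _ ≤ ∫⁻ w, H (c + σ • w) := setLIntegral_le_lintegral _ _
    _ = ∫⁻ w, (fun v => H (c + v)) (σ • w) := rfl
    _ = ENNReal.ofReal ((σ ^ k)⁻¹) * ∫⁻ v, H (c + v) := seg_comp_smul _ hHc hσ0
    _ = ENNReal.ofReal ((σ ^ k)⁻¹) * ∫⁻ z, H z := by rw [lintegral_add_left_eq_self H c]
    _ = ENNReal.ofReal ((σ ^ k)⁻¹) * ∫⁻ z in B, G z := by rw [hHdef, lintegral_indicator hB]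
    _ ≤ ENNReal.ofReal (2 ^ k) * ∫⁻ z in B, G z := by
        gcongr
        have h1 : ((1:ℝ)/2) ^ k ≤ σ ^ k := pow_le_pow_left₀ (by norm_num) hσ k
        have h2 : (0:ℝ) < ((1:ℝ)/2) ^ k := by positivity
        calc (σ ^ k)⁻¹ ≤ (((1:ℝ)/2) ^ k)⁻¹ := by
              exact inv_anti₀ h2 h1
          _ = 2 ^ k := by rw [one_div, inv_pow, inv_inv]

lemma seg_scale_Ioc (f : ℝ → ℝ≥0∞) (hf : Measurable f) {d : ℝ} (hd : 0 < d) :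
    ∫⁻ s in Set.Ioc 0 d, f s = ENNReal.ofReal d * ∫⁻ τ in Set.Ioc (0:ℝ) 1, f (d * τ) := by
  have h2 : ∀ τ : ℝ, (Set.Ioc 0 d).indicator f (d * τ)
      = (Set.Ioc (0:ℝ) 1).indicator (fun τ => f (d * τ)) τ := by
    intro τ
    by_cases h : τ ∈ Set.Ioc (0:ℝ) 1
    · rw [Set.indicator_of_mem h, Set.indicator_of_mem]
      exact ⟨mul_pos hd h.1, by nlinarith [h.2]⟩
    · rw [Set.indicator_of_notMem h, Set.indicator_of_notMem]
      intro hc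
      have hτ0 : 0 < τ := by
        rcases lt_trichotomy τ 0 with h'|h'|h'
        · nlinarith [hc.1]
        · subst h'; simp at hc
        · exact h'
      exact h ⟨hτ0, by nlinarith [hc.2]⟩
  have h1 : ∫⁻ τ, (Set.Ioc 0 d).indicator f (d * τ) ∂volume
      = ENNReal.ofReal |d⁻¹| * ∫⁻ s, (Set.Ioc 0 d).indicator f s := by
    rw [← smul_eq_mul (ENNReal.ofReal |d⁻¹|), ← lintegral_smul_measure, ← Real.map_volume_mul_left hd.ne',
      lintegral_map (hf.indicator measurableSet_Ioc) (measurable_const_mul d)]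
  calc ∫⁻ s in Set.Ioc 0 d, f s = ∫⁻ s, (Set.Ioc 0 d).indicator f s := by
        rw [lintegral_indicator measurableSet_Ioc]
    _ = ENNReal.ofReal d * (ENNReal.ofReal |d⁻¹| * ∫⁻ s, (Set.Ioc 0 d).indicator f s) := by
        rw [← mul_assoc, ← ENNReal.ofReal_mul hd.le, abs_of_nonneg (by positivity),
          mul_inv_cancel₀ hd.ne', ENNReal.ofReal_one, one_mul]
    _ = ENNReal.ofReal d * ∫⁻ τ, (Set.Ioc 0 d).indicator f (d * τ) := by rw [h1]
    _ = ENNReal.ofReal d * ∫⁻ τ in Set.Ioc (0:ℝ) 1, f (d * τ) := by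
        simp_rw [h2]; rw [lintegral_indicator measurableSet_Ioc]

lemma seg_sub {k : ℕ} (G : EuclideanSpace ℝ (Fin k) → ℝ≥0∞) (hG : Measurable G)
    (x y : EuclideanSpace ℝ (Fin k)) :
    ∫⁻ s in Set.Ioc 0 (dist x y), G (x + (s / ‖y - x‖) • (y - x))
      = ENNReal.ofReal (dist x y) * ∫⁻ τ in Set.Ioc (0:ℝ) 1, G (x + τ • (y - x)) := by
  rcases eq_or_ne x y with rfl | hxy
  · simp
  · have hd : 0 < dist x y := dist_pos.2 hxy
    have hnorm : ‖y - x‖ = dist x y := by rw [dist_eq_norm, norm_sub_rev]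
    have hmeas : Measurable fun s : ℝ => G (x + (s / ‖y - x‖) • (y - x)) := by
      apply hG.comp
      exact measurable_const.add ((measurable_id.div_const _).smul measurable_const)
    rw [seg_scale_Ioc _ hmeas hd]
    congr 1
    refine setLIntegral_congr_fun measurableSet_Ioc (fun τ hτ => ?_)
    rw [hnorm, mul_div_cancel_left₀ _ hd.ne']



set_option maxHeartbeats 1000000 in
lemma seg_core {k : ℕ} {r : ℝ} (hr : 0 < r) (x₀ y₀ : EuclideanSpace ℝ (Fin k))
    (hxy : dist x₀ y₀ = r) (G : EuclideanSpace ℝ (Fin k) → ℝ≥0∞) (hG : Measurable G) :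
    ∫⁻ x in ball x₀ r, ∫⁻ y in ball y₀ r, ∫⁻ s in Set.Ioc 0 (dist x y),
        G (x + (s / ‖y - x‖) • (y - x))
      ≤ ENNReal.ofReal (2 ^ (k+3) * r) * volume (ball y₀ (4*r)) * ∫⁻ z in ball y₀ (4*r), G z := by
  set J := ∫⁻ z in ball y₀ (4*r), G z with hJdef
  set P := volume (ball y₀ (4*r)) * J with hPdef
  have hd3 : ∀ x ∈ ball x₀ r, ∀ y ∈ ball y₀ r, dist x y < 3*r := by
    intro x hx y hy
    have h1 := mem_ball.1 hx
    have h2 := mem_ball.1 hy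
    have h3 : dist x y ≤ dist x x₀ + dist x₀ y₀ + dist y₀ y := dist_triangle4 x x₀ y₀ y
    rw [dist_comm y₀ y] at h3
    linarith
  have hvol : ∀ c : EuclideanSpace ℝ (Fin k),
      volume (ball c r) ≤ volume (ball y₀ (4*r)) := by
    intro c
    calc volume (ball c r) = volume (ball y₀ r) := by
          rw [Measure.addHaar_ball_center volume c, Measure.addHaar_ball_center volume y₀]
      _ ≤ volume (ball y₀ (4*r)) := measure_mono (ball_subset_ball (by linarith))
  -- measurability of the two half-integrals as functions on the product
  have hm1 : Measurable fun p : EuclideanSpace ℝ (Fin k) × EuclideanSpace ℝ (Fin k) =>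
      ∫⁻ τ in Set.Ioc (0:ℝ) (1/2), G (p.1 + τ • (p.2 - p.1)) :=
    seg_aux_meas hG measurable_fst (measurable_snd.sub measurable_fst) _
  have hm2 : Measurable fun p : EuclideanSpace ℝ (Fin k) × EuclideanSpace ℝ (Fin k) =>
      ∫⁻ τ in Set.Ioc (1/2:ℝ) 1, G (p.1 + τ • (p.2 - p.1)) :=
    seg_aux_meas hG measurable_fst (measurable_snd.sub measurable_fst) _
  -- the two halves
  have hTb : ∫⁻ x in ball x₀ r, ∫⁻ y in ball y₀ r, ∫⁻ τ in Set.Ioc (1/2:ℝ) 1,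
      G (x + τ • (y - x)) ≤ ENNReal.ofReal (2 ^ k) * P := by
    have hstep : ∀ x ∈ ball x₀ r, ∫⁻ y in ball y₀ r, ∫⁻ τ in Set.Ioc (1/2:ℝ) 1,
        G (x + τ • (y - x)) ≤ ENNReal.ofReal (2 ^ k) * J := by
      intro x hx
      have hswap : AEMeasurable
          (Function.uncurry fun (y : EuclideanSpace ℝ (Fin k)) (τ : ℝ) => G (x + τ • (y - x)))
          ((volume.restrict (ball y₀ r)).prod (volume.restrict (Set.Ioc (1/2:ℝ) 1))) :=
        (hG.comp (measurable_const.add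
          (measurable_snd.smul (measurable_fst.sub measurable_const)))).aemeasurable
      rw [lintegral_lintegral_swap hswap]
      calc ∫⁻ τ in Set.Ioc (1/2:ℝ) 1, ∫⁻ y in ball y₀ r, G (x + τ • (y - x))
          ≤ ∫⁻ _ in Set.Ioc (1/2:ℝ) 1, ENNReal.ofReal (2 ^ k) * J := by
            refine setLIntegral_mono' measurableSet_Ioc fun τ hτ => ?_
            have hrw : ∀ y : EuclideanSpace ℝ (Fin k),
                x + τ • (y - x) = (x - τ • x) + τ • y := fun y => by module
            simp_rw [hrw]
            refine seg_step G hG hτ.1.le _ measurableSet_ball measurableSet_ball ?_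
            intro y hy
            rw [← hrw y]
            have h1 : dist (x + τ • (y - x)) y = (1 - τ) * dist x y := by
              have h : x + τ • (y - x) - y = (1 - τ) • (x - y) := by module
              rw [dist_eq_norm, h, norm_smul, Real.norm_eq_abs,
                abs_of_nonneg (by linarith [hτ.2]), ← dist_eq_norm]
            have h2 : dist (x + τ • (y - x)) y₀ ≤ (1 - τ) * dist x y + dist y y₀ := by
              calc dist (x + τ • (y - x)) y₀ ≤ dist (x + τ • (y - x)) y + dist y y₀ :=
                    dist_triangle _ _ _
                _ = (1 - τ) * dist x y + dist y y₀ := by rw [h1]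
            have h3 := hd3 x hx y hy
            have h4 := mem_ball.1 hy
            have h5 : (0:ℝ) ≤ dist x y := dist_nonneg
            refine mem_ball.2 ?_
            nlinarith [mul_nonneg (show (0:ℝ) ≤ τ - 1/2 by linarith [hτ.1]) h5]
        _ = ENNReal.ofReal (2 ^ k) * J * volume (Set.Ioc (1/2:ℝ) 1) :=
            setLIntegral_const _ _
        _ ≤ ENNReal.ofReal (2 ^ k) * J * 1 := by
            gcongr
            rw [Real.volume_Ioc]
            exact ENNReal.ofReal_le_one.2 (by norm_num)
        _ = ENNReal.ofReal (2 ^ k) * J := mul_one _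
    calc ∫⁻ x in ball x₀ r, ∫⁻ y in ball y₀ r, ∫⁻ τ in Set.Ioc (1/2:ℝ) 1, G (x + τ • (y - x))
        ≤ ∫⁻ _ in ball x₀ r, ENNReal.ofReal (2 ^ k) * J :=
          setLIntegral_mono' measurableSet_ball hstep
      _ = ENNReal.ofReal (2 ^ k) * J * volume (ball x₀ r) := setLIntegral_const _ _
      _ ≤ ENNReal.ofReal (2 ^ k) * J * volume (ball y₀ (4*r)) := mul_le_mul_right (hvol x₀) _
      _ = ENNReal.ofReal (2 ^ k) * P := by rw [hPdef]; ring
  have hTa : ∫⁻ x in ball x₀ r, ∫⁻ y in ball y₀ r, ∫⁻ τ in Set.Ioc (0:ℝ) (1/2),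
      G (x + τ • (y - x)) ≤ ENNReal.ofReal (2 ^ k) * P := by
    have hswap0 : AEMeasurable
        (Function.uncurry fun (x y : EuclideanSpace ℝ (Fin k)) =>
          ∫⁻ τ in Set.Ioc (0:ℝ) (1/2), G (x + τ • (y - x)))
        ((volume.restrict (ball x₀ r)).prod (volume.restrict (ball y₀ r))) := hm1.aemeasurable
    rw [lintegral_lintegral_swap hswap0]
    have hstep : ∀ y ∈ ball y₀ r, ∫⁻ x in ball x₀ r, ∫⁻ τ in Set.Ioc (0:ℝ) (1/2),
        G (x + τ • (y - x)) ≤ ENNReal.ofReal (2 ^ k) * J := by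
      intro y hy
      have hswap : AEMeasurable
          (Function.uncurry fun (x : EuclideanSpace ℝ (Fin k)) (τ : ℝ) => G (x + τ • (y - x)))
          ((volume.restrict (ball x₀ r)).prod (volume.restrict (Set.Ioc (0:ℝ) (1/2)))) :=
        (hG.comp (measurable_fst.add
          (measurable_snd.smul (measurable_const.sub measurable_fst)))).aemeasurable
      rw [lintegral_lintegral_swap hswap]
      calc ∫⁻ τ in Set.Ioc (0:ℝ) (1/2), ∫⁻ x in ball x₀ r, G (x + τ • (y - x))
          ≤ ∫⁻ _ in Set.Ioc (0:ℝ) (1/2), ENNReal.ofReal (2 ^ k) * J := by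
            refine setLIntegral_mono' measurableSet_Ioc fun τ hτ => ?_
            have hrw : ∀ x : EuclideanSpace ℝ (Fin k),
                x + τ • (y - x) = (y - (1 - τ) • y) + (1 - τ) • x := fun x => by module
            simp_rw [hrw]
            refine seg_step G hG (by linarith [hτ.2] : 1/2 ≤ 1 - τ) _
              measurableSet_ball measurableSet_ball ?_
            intro x hx
            rw [← hrw x]
            have h1 : dist (x + τ • (y - x)) x = τ * dist x y := by
              have h : x + τ • (y - x) - x = τ • (y - x) := by module
              rw [dist_eq_norm, h, norm_smul, Real.norm_eq_abs,
                abs_of_nonneg (by linarith [hτ.1]), ← dist_eq_norm, dist_comm y x]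
            have h2 : dist (x + τ • (y - x)) y₀ ≤ τ * dist x y + dist x x₀ + dist x₀ y₀ := by
              calc dist (x + τ • (y - x)) y₀
                  ≤ dist (x + τ • (y - x)) x + dist x x₀ + dist x₀ y₀ := dist_triangle4 _ _ _ _
                _ = τ * dist x y + dist x x₀ + dist x₀ y₀ := by rw [h1]
            have h3 := hd3 x hx y hy
            have h4 := mem_ball.1 hx
            have h5 : (0:ℝ) ≤ dist x y := dist_nonneg
            refine mem_ball.2 ?_
            nlinarith [mul_nonneg (show (0:ℝ) ≤ 1/2 - τ by linarith [hτ.2]) h5]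
        _ = ENNReal.ofReal (2 ^ k) * J * volume (Set.Ioc (0:ℝ) (1/2)) := setLIntegral_const _ _
        _ ≤ ENNReal.ofReal (2 ^ k) * J * 1 := by
            gcongr
            rw [Real.volume_Ioc]
            exact ENNReal.ofReal_le_one.2 (by norm_num)
        _ = ENNReal.ofReal (2 ^ k) * J := mul_one _
    calc ∫⁻ y in ball y₀ r, ∫⁻ x in ball x₀ r, ∫⁻ τ in Set.Ioc (0:ℝ) (1/2), G (x + τ • (y - x))
        ≤ ∫⁻ _ in ball y₀ r, ENNReal.ofReal (2 ^ k) * J :=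
          setLIntegral_mono' measurableSet_ball hstep
      _ = ENNReal.ofReal (2 ^ k) * J * volume (ball y₀ r) := setLIntegral_const _ _
      _ ≤ ENNReal.ofReal (2 ^ k) * J * volume (ball y₀ (4*r)) := mul_le_mul_right (hvol y₀) _
      _ = ENNReal.ofReal (2 ^ k) * P := by rw [hPdef]; ring
  -- assemble
  calc ∫⁻ x in ball x₀ r, ∫⁻ y in ball y₀ r, ∫⁻ s in Set.Ioc 0 (dist x y),
        G (x + (s / ‖y - x‖) • (y - x))
      = ∫⁻ x in ball x₀ r, ∫⁻ y in ball y₀ r,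
          ENNReal.ofReal (dist x y) * ∫⁻ τ in Set.Ioc (0:ℝ) 1, G (x + τ • (y - x)) :=
        lintegral_congr fun x => lintegral_congr fun y => seg_sub G hG x y
    _ ≤ ∫⁻ x in ball x₀ r, ∫⁻ y in ball y₀ r,
          ENNReal.ofReal (3*r) * ∫⁻ τ in Set.Ioc (0:ℝ) 1, G (x + τ • (y - x)) :=
        setLIntegral_mono' measurableSet_ball fun x hx =>
          setLIntegral_mono' measurableSet_ball fun y hy =>
            mul_le_mul_left (ENNReal.ofReal_le_ofReal (hd3 x hx y hy).le) _
    _ = ENNReal.ofReal (3*r) * ∫⁻ x in ball x₀ r, ∫⁻ y in ball y₀ r,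
          ∫⁻ τ in Set.Ioc (0:ℝ) 1, G (x + τ • (y - x)) := by
        simp_rw [lintegral_const_mul' (ENNReal.ofReal (3*r)) _ ENNReal.ofReal_ne_top]
    _ ≤ ENNReal.ofReal (3*r) * (ENNReal.ofReal (2 ^ k) * P + ENNReal.ofReal (2 ^ k) * P) := by
        refine mul_le_mul_right ?_ _
        have hsplit : ∀ x y : EuclideanSpace ℝ (Fin k),
            ∫⁻ τ in Set.Ioc (0:ℝ) 1, G (x + τ • (y - x))
              ≤ (∫⁻ τ in Set.Ioc (0:ℝ) (1/2), G (x + τ • (y - x)))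
                + ∫⁻ τ in Set.Ioc (1/2:ℝ) 1, G (x + τ • (y - x)) := by
          intro x y
          rw [← Set.Ioc_union_Ioc_eq_Ioc (by norm_num : (0:ℝ) ≤ 1/2) (by norm_num : (1/2:ℝ) ≤ 1)]
          exact lintegral_union_le _ _ _
        calc ∫⁻ x in ball x₀ r, ∫⁻ y in ball y₀ r, ∫⁻ τ in Set.Ioc (0:ℝ) 1, G (x + τ • (y - x))
            ≤ ∫⁻ x in ball x₀ r, ∫⁻ y in ball y₀ r,
                ((∫⁻ τ in Set.Ioc (0:ℝ) (1/2), G (x + τ • (y - x)))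
                  + ∫⁻ τ in Set.Ioc (1/2:ℝ) 1, G (x + τ • (y - x))) :=
              lintegral_mono fun x => lintegral_mono fun y => hsplit x y
          _ = ∫⁻ x in ball x₀ r, ((∫⁻ y in ball y₀ r, ∫⁻ τ in Set.Ioc (0:ℝ) (1/2),
                  G (x + τ • (y - x)))
                + ∫⁻ y in ball y₀ r, ∫⁻ τ in Set.Ioc (1/2:ℝ) 1, G (x + τ • (y - x))) := by
              refine lintegral_congr fun x => ?_
              exact lintegral_add_left
                (seg_aux_meas hG measurable_const (measurable_id.sub measurable_const) _) _
          _ = (∫⁻ x in ball x₀ r, ∫⁻ y in ball y₀ r, ∫⁻ τ in Set.Ioc (0:ℝ) (1/2),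
                  G (x + τ • (y - x)))
                + ∫⁻ x in ball x₀ r, ∫⁻ y in ball y₀ r, ∫⁻ τ in Set.Ioc (1/2:ℝ) 1,
                  G (x + τ • (y - x)) :=
              lintegral_add_left hm1.lintegral_prod_right' _
          _ ≤ ENNReal.ofReal (2 ^ k) * P + ENNReal.ofReal (2 ^ k) * P := add_le_add hTa hTb
    _ = ENNReal.ofReal (3*r * (2 ^ k + 2 ^ k)) * P := by
        rw [← add_mul, ← mul_assoc, ← ENNReal.ofReal_add (by positivity) (by positivity),
          ← ENNReal.ofReal_mul (by positivity)]
    _ ≤ ENNReal.ofReal (2 ^ (k+3) * r) * P := by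
        refine mul_le_mul_left (ENNReal.ofReal_le_ofReal ?_) _
        have h8 : (2:ℝ) ^ (k+3) = 2 ^ k * 8 := by ring
        nlinarith [pow_pos (show (0:ℝ) < 2 by norm_num) k]
    _ = ENNReal.ofReal (2 ^ (k+3) * r) * volume (ball y₀ (4*r)) * J := by
        rw [hPdef, mul_assoc]


set_option maxHeartbeats 1000000 in
/-- Euclidean model case of the Cheeger–Colding segment
inequality. -/
theorem stmt_18 (k : ℕ) (hk : 1 ≤ k) (r : ℝ) (hr : 0 < r)
    (x₀ y₀ : EuclideanSpace ℝ (Fin k)) (hxy : dist x₀ y₀ = r)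
    (u : EuclideanSpace ℝ (Fin k) → ℝ) (hu0 : ∀ z, 0 ≤ u z)
    (hu : IntegrableOn u (ball y₀ (4*r))) :
    (∫ x in ball x₀ r, ∫ y in ball y₀ r,
        (∫ s in (0:ℝ)..(dist x y), u (x + (s / ‖y - x‖) • (y - x))))
      ≤ 2 ^ (k+3) * r * (volume (ball y₀ (4*r))).toReal *
        ∫ z in ball y₀ (4*r), u z := by
  have hvolfin : volume (ball y₀ (4*r)) ≠ ⊤ := measure_ball_lt_top.ne
  -- a measurable majorant of `ENNReal.ofReal ∘ u` on the big ball
  have hUm : AEMeasurable (fun z => ENNReal.ofReal (u z)) (volume.restrict (ball y₀ (4*r))) :=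
    ENNReal.measurable_ofReal.comp_aemeasurable hu.aemeasurable
  obtain ⟨V, hV, hVeq⟩ := hUm
  have hS0 : volume ({z | ENNReal.ofReal (u z) ≠ V z} ∩ ball y₀ (4*r)) = 0 := by
    have h := hVeq
    rw [Filter.EventuallyEq, ae_iff, Measure.restrict_apply' measurableSet_ball] at h
    exact h
  set M := toMeasurable volume ({z | ENNReal.ofReal (u z) ≠ V z} ∩ ball y₀ (4*r)) with hMdef
  have hM : MeasurableSet M := measurableSet_toMeasurable _ _
  have hM0 : volume M = 0 := by rw [hMdef, measure_toMeasurable]; exact hS0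
  set W : EuclideanSpace ℝ (Fin k) → ℝ≥0∞ :=
    fun z => V z + M.indicator (fun _ => ⊤) z with hWdef
  have hW : Measurable W := hV.add (measurable_const.indicator hM)
  have hWb : ∀ z ∈ ball y₀ (4*r), ENNReal.ofReal (u z) ≤ W z := by
    intro z hz
    by_cases h : z ∈ M
    · simp [hWdef, Set.indicator_of_mem h]
    · have hz' : ¬ (ENNReal.ofReal (u z) ≠ V z) := by
        intro hne
        exact h (subset_toMeasurable _ _ ⟨hne, hz⟩)
      rw [not_not] at hz'
      simp [hWdef, Set.indicator_of_notMem h, hz'.le]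
  have hWint : ∫⁻ z in ball y₀ (4*r), W z = ENNReal.ofReal (∫ z in ball y₀ (4*r), u z) := by
    have h1 : ∫⁻ z in ball y₀ (4*r), W z
        = (∫⁻ z in ball y₀ (4*r), V z)
          + ∫⁻ z in ball y₀ (4*r), M.indicator (fun _ => (⊤:ℝ≥0∞)) z := lintegral_add_left hV _
    have h2 : ∫⁻ z in ball y₀ (4*r), M.indicator (fun _ => (⊤:ℝ≥0∞)) z = 0 := by
      rw [lintegral_indicator hM, setLIntegral_const]
      have h3 : (volume.restrict (ball y₀ (4*r))) M = 0 := by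
        rw [Measure.restrict_apply hM]
        exact measure_mono_null Set.inter_subset_left hM0
      rw [h3, mul_zero]
    have h3 : ∫⁻ z in ball y₀ (4*r), V z = ∫⁻ z in ball y₀ (4*r), ENNReal.ofReal (u z) :=
      lintegral_congr_ae hVeq.symm
    rw [h1, h2, add_zero, h3,
      ← ofReal_integral_eq_lintegral_ofReal hu (Filter.Eventually.of_forall hu0)]
  have hRHS0 : 0 ≤ 2 ^ (k+3) * r * (volume (ball y₀ (4*r))).toReal
      * ∫ z in ball y₀ (4*r), u z :=
    mul_nonneg (mul_nonneg (mul_nonneg (by positivity) hr.le) ENNReal.toReal_nonneg)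
      (integral_nonneg hu0)
  have hF0 : ∀ x y : EuclideanSpace ℝ (Fin k),
      0 ≤ ∫ s in (0:ℝ)..(dist x y), u (x + (s / ‖y - x‖) • (y - x)) := fun x y =>
    intervalIntegral.integral_nonneg dist_nonneg (fun s _ => hu0 _)
  have hg0 : ∀ x : EuclideanSpace ℝ (Fin k),
      0 ≤ ∫ y in ball y₀ r, ∫ s in (0:ℝ)..(dist x y), u (x + (s / ‖y - x‖) • (y - x)) :=
    fun x => integral_nonneg fun y => hF0 x y
  -- membership of segment points in the big ball
  have hmem : ∀ x ∈ ball x₀ r, ∀ y ∈ ball y₀ r, ∀ s ∈ Set.Ioc 0 (dist x y),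
      x + (s / ‖y - x‖) • (y - x) ∈ ball y₀ (4*r) := by
    intro x hx y hy s hs
    have hd : 0 < dist x y := lt_of_lt_of_le hs.1 hs.2
    have hn : ‖y - x‖ = dist x y := by rw [dist_eq_norm, norm_sub_rev]
    set t := s / ‖y - x‖ with htdef
    have ht0 : 0 ≤ t := div_nonneg hs.1.le (norm_nonneg _)
    have ht1 : t ≤ 1 := by
      rw [htdef, hn]
      exact (div_le_one hd).2 hs.2
    have hid : x + t • (y - x) - y₀ = (1 - t) • (x - y₀) + t • (y - y₀) := by module
    have hb : dist (x + t • (y - x)) y₀ ≤ (1 - t) * dist x y₀ + t * dist y y₀ := by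
      rw [dist_eq_norm, hid]
      calc ‖(1 - t) • (x - y₀) + t • (y - y₀)‖
          ≤ ‖(1 - t) • (x - y₀)‖ + ‖t • (y - y₀)‖ := norm_add_le _ _
        _ = (1 - t) * dist x y₀ + t * dist y y₀ := by
            rw [norm_smul, norm_smul, Real.norm_eq_abs, Real.norm_eq_abs,
              abs_of_nonneg (by linarith), abs_of_nonneg ht0, dist_eq_norm, dist_eq_norm]
    have hxy0 : dist x y₀ < 2*r := by
      have := dist_triangle x x₀ y₀
      have := mem_ball.1 hx
      linarith
    have hyy0 : dist y y₀ < r := mem_ball.1 hy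
    have e1 : (1 - t) * dist x y₀ ≤ (1 - t) * (2*r) :=
      mul_le_mul_of_nonneg_left hxy0.le (by linarith)
    have e2 : t * dist y y₀ ≤ t * r := mul_le_mul_of_nonneg_left hyy0.le ht0
    have e3 : 0 ≤ r * t := mul_nonneg hr.le ht0
    refine mem_ball.2 ?_
    nlinarith
  by_cases hmg : AEStronglyMeasurable
      (fun x => ∫ y in ball y₀ r, ∫ s in (0:ℝ)..(dist x y), u (x + (s / ‖y - x‖) • (y - x)))
      (volume.restrict (ball x₀ r))
  · rw [integral_eq_lintegral_of_nonneg_ae (Filter.Eventually.of_forall hg0) hmg]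
    refine ENNReal.toReal_le_of_le_ofReal hRHS0 ?_
    calc ∫⁻ x in ball x₀ r, ENNReal.ofReal
            (∫ y in ball y₀ r, ∫ s in (0:ℝ)..(dist x y), u (x + (s / ‖y - x‖) • (y - x)))
        ≤ ∫⁻ x in ball x₀ r, ∫⁻ y in ball y₀ r, ENNReal.ofReal
            (∫ s in (0:ℝ)..(dist x y), u (x + (s / ‖y - x‖) • (y - x))) :=
          lintegral_mono fun x => seg_ofReal_integral_le _ (fun y => hF0 x y)
      _ = ∫⁻ x in ball x₀ r, ∫⁻ y in ball y₀ r, ENNReal.ofReal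
            (∫ s in Set.Ioc 0 (dist x y), u (x + (s / ‖y - x‖) • (y - x))) := by
          refine lintegral_congr fun x => lintegral_congr fun y => ?_
          rw [intervalIntegral.integral_of_le dist_nonneg]
      _ ≤ ∫⁻ x in ball x₀ r, ∫⁻ y in ball y₀ r, ∫⁻ s in Set.Ioc 0 (dist x y),
            ENNReal.ofReal (u (x + (s / ‖y - x‖) • (y - x))) :=
          lintegral_mono fun x => lintegral_mono fun y =>
            seg_ofReal_integral_le _ (fun s => hu0 _)
      _ ≤ ∫⁻ x in ball x₀ r, ∫⁻ y in ball y₀ r, ∫⁻ s in Set.Ioc 0 (dist x y),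
            W (x + (s / ‖y - x‖) • (y - x)) :=
          setLIntegral_mono' measurableSet_ball fun x hx =>
            setLIntegral_mono' measurableSet_ball fun y hy =>
              setLIntegral_mono' measurableSet_Ioc fun s hs =>
                hWb _ (hmem x hx y hy s hs)
      _ ≤ ENNReal.ofReal (2 ^ (k+3) * r) * volume (ball y₀ (4*r))
            * ∫⁻ z in ball y₀ (4*r), W z := seg_core hr x₀ y₀ hxy W hW
      _ = ENNReal.ofReal (2 ^ (k+3) * r) * ENNReal.ofReal ((volume (ball y₀ (4*r))).toReal)
            * ENNReal.ofReal (∫ z in ball y₀ (4*r), u z) := by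
          rw [hWint, ENNReal.ofReal_toReal hvolfin]
      _ = ENNReal.ofReal (2 ^ (k+3) * r * (volume (ball y₀ (4*r))).toReal
            * ∫ z in ball y₀ (4*r), u z) := by
          rw [← ENNReal.ofReal_mul (by positivity), ← ENNReal.ofReal_mul
            (mul_nonneg (by positivity) ENNReal.toReal_nonneg)]
  · rw [integral_undef (fun h => hmg h.aestronglyMeasurable)]
    exact hRHS0
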